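/- arXiv:2003.09960 — 2 statements merged into one kernel-verified Lean document; each statement's English description precedes it below -/
import Mathlib

section
/- Let X be a random vector in ℝ^{d+1} with ‖X‖_{ψ2} ≤ M and E(XX^⊤) ⪰ σ²I for some σ > 0, let f be the clipped loss with parameters b ≥ 2a ≥ 4, let h(x) = (x²−1)²/4, and for λ ≥ 0 and γ = (α, β) ∈ ℝ × ℝ^d define L_λ(γ) = E f(γ^⊤X) + (λ/2)α² and L^h_λ(γ) = E h(γ^⊤X) + (λ/2)α². Then there exists m > 0, depending only on M and σ, such that ‖∇L_λ(γ)‖₂ ≥ m and ‖∇L^h_λ(γ)‖₂ ≥ m for every γ with ‖γ‖₂ ≥ 3/m. -/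
open MeasureTheory ProbabilityTheory
open scoped RealInnerProductSpace

/-- `ℝ^d` with the Euclidean norm. -/
abbrev Vec (d : ℕ) := EuclideanSpace ℝ (Fin d)

/-- `ℝ × ℝ^d` with the Euclidean (ℓ²) norm; we identify `ℝ^{d+1}` with `ℝ × ℝ^d`,
`γ = (α, β)`. -/
abbrev Pr (d : ℕ) := WithLp 2 (ℝ × Vec d)

/-- The quartic loss `h(x) = (x² - 1)² / 4`. -/
noncomputable def hq (x : ℝ) : ℝ := (x ^ 2 - 1) ^ 2 / 4

/-- The clipped loss `f` with parameters `a < b`: it agrees with `hq` on `[-a, a]`,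
is a cubic spline on `a < |x| ≤ b` (built from `h'(a) = a³ - a` and `h''(a) = 3a² - 1`),
and is linear for `|x| > b`. -/
noncomputable def fclip (a b x : ℝ) : ℝ :=
  if |x| ≤ a then hq x
  else if |x| ≤ b then
    hq a + (a ^ 3 - a) * (|x| - a) + ((3 * a ^ 2 - 1) / 2) * (|x| - a) ^ 2
      - ((3 * a ^ 2 - 1) / (6 * (b - a))) * (|x| - a) ^ 3
  else
    (hq a + (a ^ 3 - a) * (b - a) + ((3 * a ^ 2 - 1) / 2) * (b - a) ^ 2
      - ((3 * a ^ 2 - 1) / (6 * (b - a))) * (b - a) ^ 3)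
      + ((a ^ 3 - a) + ((b - a) / 2) * (3 * a ^ 2 - 1)) * (|x| - b)

/-- The loss `L_λ(γ) = E g(γ⊤X) + (λ/2)α²` for `γ = (α, β) ∈ ℝ × ℝ^d ≅ ℝ^{d+1}`. -/
noncomputable def genLoss {d : ℕ} {Ω : Type*} [MeasurableSpace Ω] (P : Measure Ω)
    (X : Ω → Pr d) (g : ℝ → ℝ) (lam : ℝ) (γ : Pr d) : ℝ :=
  (∫ ω, g ⟪γ, X ω⟫ ∂P) + lam / 2 * ((WithLp.equiv 2 (ℝ × Vec d) γ).1) ^ 2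

noncomputable instance {d : ℕ} : MeasurableSpace (Pr d) := borel _
instance {d : ℕ} : BorelSpace (Pr d) := ⟨rfl⟩


open Set Filter
open scoped Topology

noncomputable def fmid (a b t : ℝ) : ℝ :=
  hq a + (a ^ 3 - a) * (t - a) + ((3 * a ^ 2 - 1) / 2) * (t - a) ^ 2
    - ((3 * a ^ 2 - 1) / (6 * (b - a))) * (t - a) ^ 3

noncomputable def flin (a b t : ℝ) : ℝ :=
  fmid a b b + ((a ^ 3 - a) + ((b - a) / 2) * (3 * a ^ 2 - 1)) * (t - b)

noncomputable def phi (a b t : ℝ) : ℝ :=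
  if t ≤ a then hq t else if t ≤ b then fmid a b t else flin a b t

noncomputable def dmid (a b t : ℝ) : ℝ :=
  (a ^ 3 - a) + (3 * a ^ 2 - 1) * (t - a) - ((3 * a ^ 2 - 1) / (2 * (b - a))) * (t - a) ^ 2

noncomputable def slin (a b : ℝ) : ℝ := (a ^ 3 - a) + ((b - a) / 2) * (3 * a ^ 2 - 1)

noncomputable def psi (a b t : ℝ) : ℝ :=
  if t ≤ a then t ^ 3 - t else if t ≤ b then dmid a b t else slin a b

noncomputable def fder (a b x : ℝ) : ℝ :=
  if 0 ≤ x then psi a b x else -psi a b (-x)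

lemma hq_hasDerivAt (x : ℝ) : HasDerivAt hq (x ^ 3 - x) x := by
  have h : HasDerivAt (fun y : ℝ => (y ^ 2 - 1) ^ 2 / 4)
      ((2 : ℕ) * (x ^ 2 - 1) ^ (2 - 1) * (2 * x ^ (2 - 1)) / 4) x :=
    (((hasDerivAt_pow 2 x).sub_const 1).pow 2).div_const 4
  refine h.congr_deriv ?_
  push_cast; ring

lemma fmid_hasDerivAt {a b : ℝ} (hne : b - a ≠ 0) (t : ℝ) : HasDerivAt (fmid a b) (dmid a b t) t := by
  have hs : HasDerivAt (fun y : ℝ => y - a) 1 t := (hasDerivAt_id t).sub_const a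
  have h := (((hasDerivAt_const t (hq a)).add (HasDerivAt.const_mul (a ^ 3 - a) hs)).add
      (HasDerivAt.const_mul ((3 * a ^ 2 - 1) / 2) (hs.pow 2))).sub
      (HasDerivAt.const_mul ((3 * a ^ 2 - 1) / (6 * (b - a))) (hs.pow 3))
  refine h.congr_deriv ?_
  unfold dmid
  push_cast
  field_simp
  ring

lemma flin_hasDerivAt (a b t : ℝ) : HasDerivAt (flin a b) (slin a b) t := by
  have hs : HasDerivAt (fun y : ℝ => y - b) 1 t := (hasDerivAt_id t).sub_const b
  have h := (hasDerivAt_const t (fmid a b b)).add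
      (HasDerivAt.const_mul ((a ^ 3 - a) + ((b - a) / 2) * (3 * a ^ 2 - 1)) hs)
  refine h.congr_deriv ?_
  unfold slin; ring

lemma fmid_a (a b : ℝ) : fmid a b a = hq a := by simp [fmid]
lemma dmid_a (a b : ℝ) : dmid a b a = a ^ 3 - a := by simp [dmid]
lemma flin_b (a b : ℝ) : flin a b b = fmid a b b := by simp [flin]
lemma dmid_b {a b : ℝ} (hab : a < b) : dmid a b b = slin a b := by
  have h : b - a ≠ 0 := sub_ne_zero.2 hab.ne'
  unfold dmid slin; field_simp; ring

lemma phi_eq_fmid {a b : ℝ} {s : ℝ} (h1 : a ≤ s) (h2 : s ≤ b) : phi a b s = fmid a b s := by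
  unfold phi
  rcases eq_or_lt_of_le h1 with h | h
  · rw [if_pos h.ge, ← h, fmid_a]
  · rw [if_neg (not_le.2 h), if_pos h2]

lemma phi_eq_flin {a b : ℝ} (hab : a < b) {s : ℝ} (h1 : b ≤ s) : phi a b s = flin a b s := by
  unfold phi
  rcases eq_or_lt_of_le h1 with h | h
  · rw [if_neg (not_le.2 (h ▸ hab)), if_pos h.ge, ← h, flin_b]
  · rw [if_neg (not_le.2 (hab.trans h)), if_neg (not_le.2 h)]

lemma psi_hasDerivAt {a b : ℝ} (hab : a < b) (t : ℝ) :
    HasDerivAt (phi a b) (psi a b t) t := by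
  have hne : b - a ≠ 0 := sub_ne_zero.2 hab.ne'
  rcases lt_trichotomy t a with ht | rfl | ht
  · -- t < a
    have he : phi a b =ᶠ[𝓝 t] hq := by
      filter_upwards [Iio_mem_nhds ht] with s hs
      exact if_pos (le_of_lt hs)
    rw [psi, if_pos ht.le]
    exact (hq_hasDerivAt t).congr_of_eventuallyEq he
  · -- t = t
    have hleft : HasDerivWithinAt (phi t b) (t ^ 3 - t) (Iic t) t :=
      ((hq_hasDerivAt t).hasDerivWithinAt).congr (fun s hs => if_pos hs) (if_pos le_rfl)
    have hright : HasDerivWithinAt (phi t b) (t ^ 3 - t) (Ici t) t := by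
      have h1 : HasDerivWithinAt (fmid t b) (t ^ 3 - t) (Ici t) t := by
        have := (fmid_hasDerivAt hne t).hasDerivWithinAt (s := Ici t)
        rwa [dmid_a] at this
      refine h1.congr_of_eventuallyEq ?_ (phi_eq_fmid le_rfl hab.le)
      filter_upwards [inter_mem self_mem_nhdsWithin
        (mem_nhdsWithin_of_mem_nhds (Iio_mem_nhds hab))] with s hs
      exact phi_eq_fmid hs.1 hs.2.le
    have hu := hleft.union hright
    rw [Iic_union_Ici, hasDerivWithinAt_univ] at hu
    rwa [psi, if_pos le_rfl]
  · rcases lt_trichotomy t b with htb | rfl | htb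
    · -- a < t < b
      have he : phi a b =ᶠ[𝓝 t] fmid a b := by
        filter_upwards [inter_mem (Ioi_mem_nhds ht) (Iio_mem_nhds htb)] with s hs
        exact phi_eq_fmid hs.1.le hs.2.le
      rw [psi, if_neg (not_le.2 ht), if_pos htb.le]
      exact (fmid_hasDerivAt hne t).congr_of_eventuallyEq he
    · -- t = t
      have hleft : HasDerivWithinAt (phi a t) (slin a t) (Iic t) t := by
        have h1 : HasDerivWithinAt (fmid a t) (slin a t) (Iic t) t := by
          have := (fmid_hasDerivAt hne t).hasDerivWithinAt (s := Iic t)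
          rwa [dmid_b hab] at this
        refine h1.congr_of_eventuallyEq ?_ (phi_eq_fmid hab.le le_rfl)
        filter_upwards [inter_mem self_mem_nhdsWithin
          (mem_nhdsWithin_of_mem_nhds (Ioi_mem_nhds hab))] with s hs
        exact phi_eq_fmid hs.2.le hs.1
      have hright : HasDerivWithinAt (phi a t) (slin a t) (Ici t) t :=
        ((flin_hasDerivAt a t t).hasDerivWithinAt).congr
          (fun s hs => phi_eq_flin hab hs) (phi_eq_flin hab le_rfl)
      have hu := hleft.union hright
      rw [Iic_union_Ici, hasDerivWithinAt_univ] at hu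
      rw [psi, if_neg (not_le.2 hab), if_pos le_rfl, dmid_b hab]
      exact hu
    · -- b < t
      have he : phi a b =ᶠ[𝓝 t] flin a b := by
        filter_upwards [Ioi_mem_nhds htb] with s hs
        exact phi_eq_flin hab hs.le
      rw [psi, if_neg (not_le.2 (hab.trans htb)), if_neg (not_le.2 htb)]
      exact (flin_hasDerivAt a b t).congr_of_eventuallyEq he

lemma fclip_eq_phi_abs (a b x : ℝ) : fclip a b x = phi a b |x| := by
  simp only [fclip, phi, fmid, flin, hq, sq_abs]

lemma fclip_hasDerivAt {a b : ℝ} (ha : 0 < a) (hab : a < b) (x : ℝ) :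
    HasDerivAt (fclip a b) (fder a b x) x := by
  rcases lt_trichotomy x 0 with hx | rfl | hx
  · have he : fclip a b =ᶠ[𝓝 x] fun y => phi a b (-y) := by
      filter_upwards [Iio_mem_nhds hx] with s hs
      rw [fclip_eq_phi_abs, abs_of_neg hs]
    have h1 : HasDerivAt (fun y : ℝ => phi a b (-y)) (psi a b (-x) * (-1)) x :=
      (psi_hasDerivAt hab (-x)).comp x (hasDerivAt_neg x)
    have h2 := h1.congr_of_eventuallyEq he
    rw [fder, if_neg (not_le.2 hx)]
    refine h2.congr_deriv ?_; ring
  · have he : fclip a b =ᶠ[𝓝 (0:ℝ)] hq := by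
      filter_upwards [Metric.ball_mem_nhds (0:ℝ) ha] with s hs
      rw [Real.ball_eq_Ioo] at hs
      rw [fclip, if_pos (by rw [abs_le]; constructor <;> simp at hs <;> linarith [hs.1, hs.2])]
    have h2 := (hq_hasDerivAt 0).congr_of_eventuallyEq he
    rw [fder, if_pos le_rfl, psi, if_pos (by simpa using ha.le)]
    simpa using h2
  · have he : fclip a b =ᶠ[𝓝 x] phi a b := by
      filter_upwards [Ioi_mem_nhds hx] with s hs
      rw [fclip_eq_phi_abs, abs_of_pos hs]
    have h2 := (psi_hasDerivAt hab x).congr_of_eventuallyEq he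
    rwa [fder, if_pos hx.le]

lemma psi_lb {a b : ℝ} (ha : 2 ≤ a) (hb : 2 * a ≤ b) {t : ℝ} (ht : a ≤ t) :
    a ^ 3 - a ≤ psi a b t := by
  have hab : a < b := by linarith
  have hΔ : (0:ℝ) < b - a := by linarith
  rw [psi]
  rcases eq_or_lt_of_le ht with h | h
  · rw [if_pos h.ge, ← h]
  rw [if_neg (not_le.2 h)]
  have hc2 : (0:ℝ) ≤ 3 * a ^ 2 - 1 := by nlinarith
  split_ifs with h2
  · rw [dmid]
    have key : (3 * a ^ 2 - 1) / (2 * (b - a)) * (t - a) ^ 2 ≤ (3 * a ^ 2 - 1) * (t - a) := by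
      rw [div_mul_eq_mul_div, div_le_iff₀ (by linarith)]
      nlinarith [mul_nonneg (mul_nonneg hc2 (by linarith : (0:ℝ) ≤ t - a))
        (by linarith : (0:ℝ) ≤ 2 * (b - a) - (t - a))]
    linarith
  · rw [slin]
    nlinarith [mul_nonneg (by linarith : (0:ℝ) ≤ b - a) hc2]

lemma psi_ub {a b : ℝ} (ha : 2 ≤ a) (hb : 2 * a ≤ b) {t : ℝ} (ht : a ≤ t) :
    psi a b t ≤ t ^ 3 - t := by
  have hab : a < b := by linarith
  have hΔ : (0:ℝ) < b - a := by linarith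
  rw [psi]
  rcases eq_or_lt_of_le ht with h | h
  · rw [if_pos h.ge, ← h]
  rw [if_neg (not_le.2 h)]
  have hc2 : (0:ℝ) ≤ 3 * a ^ 2 - 1 := by nlinarith
  have key : a ^ 3 - a + (3 * a ^ 2 - 1) * (t - a) ≤ t ^ 3 - t := by
    nlinarith [sq_nonneg (t - a), mul_nonneg (sq_nonneg (t - a)) (by linarith : (0:ℝ) ≤ t + 2 * a)]
  split_ifs with h2
  · rw [dmid]
    have h3 : 0 ≤ (3 * a ^ 2 - 1) / (2 * (b - a)) * (t - a) ^ 2 :=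
      mul_nonneg (div_nonneg hc2 (by linarith)) (sq_nonneg _)
    linarith
  · rw [slin]
    push_neg at h2
    have key2 : a ^ 3 - a + (3 * a ^ 2 - 1) * (b - a) ≤ b ^ 3 - b := by
      nlinarith [mul_nonneg (sq_nonneg (b - a)) (by linarith : (0:ℝ) ≤ b + 2 * a)]
    have key3 : b ^ 3 - b ≤ t ^ 3 - t := by
      nlinarith [mul_nonneg (by linarith : (0:ℝ) ≤ t - b)
        (by nlinarith : (0:ℝ) ≤ t ^ 2 + t * b + b ^ 2 - 1)]
    nlinarith [mul_nonneg (by linarith : (0:ℝ) ≤ b - a) hc2]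

lemma quartic_ineq {t : ℝ} (ht : 0 ≤ t) : 6 * t - 13 ≤ (t ^ 3 - t) * t := by
  nlinarith [sq_nonneg (t - 1), sq_nonneg (t ^ 2 - 2), sq_nonneg (t ^ 2 + t - 3), sq_nonneg t,
    sq_nonneg (t - 2), sq_nonneg (t ^ 2 - t - 1)]

lemma psi_mul_lb {a b : ℝ} (ha : 2 ≤ a) (hb : 2 * a ≤ b) {t : ℝ} (ht : 0 ≤ t) :
    6 * t - 13 ≤ psi a b t * t := by
  rcases le_or_gt t a with h | h
  · rw [psi, if_pos h]; exact quartic_ineq ht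
  · have h1 : a ^ 3 - a ≤ psi a b t := psi_lb ha hb h.le
    have h2 : (6:ℝ) ≤ a ^ 3 - a := by
      nlinarith [mul_nonneg (by linarith : (0:ℝ) ≤ a - 2) (by nlinarith : (0:ℝ) ≤ a ^ 2 + 2 * a + 3)]
    nlinarith
lemma psi_abs_ub {a b : ℝ} (ha : 2 ≤ a) (hb : 2 * a ≤ b) {t : ℝ} (ht : 0 ≤ t) :
    |psi a b t| ≤ t ^ 3 + t := by
  rcases le_or_gt t a with h | h
  · rw [psi, if_pos h, abs_le]
    constructor <;> nlinarith [pow_nonneg ht 3]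
  · have h1 : a ^ 3 - a ≤ psi a b t := psi_lb ha hb h.le
    have h2 : (6:ℝ) ≤ a ^ 3 - a := by
      nlinarith [mul_nonneg (by linarith : (0:ℝ) ≤ a - 2) (by nlinarith : (0:ℝ) ≤ a ^ 2 + 2 * a + 3)]
    rw [abs_of_nonneg (by linarith)]
    have := psi_ub ha hb h.le
    linarith

lemma fder_mul_lb {a b : ℝ} (ha : 2 ≤ a) (hb : 2 * a ≤ b) (x : ℝ) :
    6 * |x| - 13 ≤ fder a b x * x := by
  rw [fder]
  split_ifs with h
  · rw [abs_of_nonneg h]; exact psi_mul_lb ha hb h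
  · push_neg at h
    rw [abs_of_neg h]
    have := psi_mul_lb ha hb (t := -x) (by linarith)
    nlinarith

lemma fder_abs_ub {a b : ℝ} (ha : 2 ≤ a) (hb : 2 * a ≤ b) (x : ℝ) :
    |fder a b x| ≤ |x| ^ 3 + |x| := by
  rw [fder]
  split_ifs with h
  · rw [abs_of_nonneg h]; exact psi_abs_ub ha hb h
  · push_neg at h
    rw [abs_of_neg h, abs_neg]
    exact psi_abs_ub ha hb (by linarith)

lemma hqder_mul_lb (x : ℝ) : 6 * |x| - 13 ≤ (x ^ 3 - x) * x := by
  have := quartic_ineq (t := |x|) (abs_nonneg x)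
  have h1 : (|x| ^ 3 - |x|) * |x| = (x ^ 3 - x) * x := by
    rcases le_or_gt 0 x with h | h
    · rw [abs_of_nonneg h]
    · rw [abs_of_neg h]; ring
  linarith

lemma hqder_abs_ub (x : ℝ) : |x ^ 3 - x| ≤ |x| ^ 3 + |x| := by
  calc |x ^ 3 - x| ≤ |x ^ 3| + |x| := abs_sub _ _
  _ = |x| ^ 3 + |x| := by rw [abs_pow]

lemma psi_measurable (a b : ℝ) : Measurable (psi a b) := by
  unfold psi dmid slin
  exact Measurable.ite measurableSet_Iic (by fun_prop)
    (Measurable.ite measurableSet_Iic (by fun_prop) (by fun_prop))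

lemma fder_measurable (a b : ℝ) : Measurable (fder a b) := by
  unfold fder
  exact Measurable.ite measurableSet_Ici (psi_measurable a b)
    (((psi_measurable a b).comp measurable_neg).neg)

lemma growth_of_deriv {g gder : ℝ → ℝ} (hg : ∀ x, HasDerivAt g (gder x) x)
    (hb : ∀ x, |gder x| ≤ |x| ^ 3 + |x|) (s : ℝ) : |g s| ≤ |g 0| + (|s| ^ 3 + |s|) * |s| := by
  have key : ‖g s - g 0‖ ≤ (|s| ^ 3 + |s|) * ‖s - 0‖ := by
    apply Convex.norm_image_sub_le_of_norm_hasDerivWithin_le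
      (f' := gder) (s := Set.Icc (-|s|) (|s|))
      (fun y _ => (hg y).hasDerivWithinAt) ?_ (convex_Icc _ _) ?_ ?_
    · intro y hy
      have h1 : |y| ≤ |s| := abs_le.2 ⟨hy.1, hy.2⟩
      calc ‖gder y‖ ≤ |y| ^ 3 + |y| := hb y
      _ ≤ |s| ^ 3 + |s| := by
          have := pow_le_pow_left₀ (abs_nonneg y) h1 3
          linarith
    · exact ⟨neg_nonpos.2 (abs_nonneg s), abs_nonneg s⟩
    · exact ⟨neg_abs_le s, le_abs_self s⟩
  rw [Real.norm_eq_abs, sub_zero, Real.norm_eq_abs] at key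
  calc |g s| ≤ |g s - g 0| + |g 0| := by
        have := abs_add_le (g s - g 0) (g 0); simpa using this
  _ ≤ |g 0| + (|s| ^ 3 + |s|) * |s| := by linarith

section Vector

variable {d : ℕ} {Ω : Type} [MeasurableSpace Ω] {P : Measure Ω} [IsProbabilityMeasure P]
  {X : Ω → Pr d}

lemma meas_inner (hX : Measurable X) (u : Pr d) : Measurable (fun ω => ⟪u, X ω⟫) :=
  (innerSL ℝ u).continuous.measurable.comp hX

lemma normsq_eq_sum (v : Pr d) :
    ‖v‖ ^ 2 = ∑ i, ⟪(stdOrthonormalBasis ℝ (Pr d)) i, v⟫ ^ 2 := by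
  rw [← real_inner_self_eq_norm_sq]
  rw [← OrthonormalBasis.sum_inner_mul_inner (stdOrthonormalBasis ℝ (Pr d)) v v]
  congr 1; ext i
  rw [real_inner_comm, sq]

lemma integrable_norm_pow_four (hX : Measurable X)
    (hmom : ∀ u : Pr d, ‖u‖ = 1 → ∀ p : ℝ, 1 ≤ p →
      Integrable (fun ω => |⟪u, X ω⟫| ^ p) P ∧
        (∫ ω, |⟪u, X ω⟫| ^ p ∂P) ^ (1 / p) ≤ Real.sqrt p * M) :
    Integrable (fun ω => ‖X ω‖ ^ (4:ℕ)) P := by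
  set B := stdOrthonormalBasis ℝ (Pr d)
  set N : ℕ := Finset.univ.card (α := Fin (Module.finrank ℝ (Pr d)))
  have hInt : ∀ i, Integrable (fun ω => ⟪B i, X ω⟫ ^ (4:ℕ)) P := by
    intro i
    have h1 := (hmom (B i) (B.orthonormal.1 i) 4 (by norm_num)).1
    refine h1.congr (Eventually.of_forall fun ω => ?_)
    show |⟪B i, X ω⟫| ^ (4:ℝ) = ⟪B i, X ω⟫ ^ (4:ℕ)
    rw [show ((4:ℝ)) = ((4:ℕ):ℝ) by norm_num, Real.rpow_natCast, ← abs_pow,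
      abs_of_nonneg (by positivity)]
  have hIntSum : Integrable (fun ω => (N:ℝ) * ∑ i, ⟪B i, X ω⟫ ^ (4:ℕ)) P :=
    (integrable_finset_sum _ fun i _ => hInt i).const_mul _
  refine hIntSum.mono' ((hX.norm.pow_const 4).aestronglyMeasurable) (Eventually.of_forall fun ω => ?_)
  rw [Real.norm_eq_abs, abs_of_nonneg (by positivity)]
  have h2 : ‖X ω‖ ^ (4:ℕ) = (‖X ω‖ ^ 2) ^ 2 := by ring
  rw [h2, normsq_eq_sum]
  calc (∑ i, ⟪B i, X ω⟫ ^ 2) ^ 2 ≤ N * ∑ i, (⟪B i, X ω⟫ ^ 2) ^ 2 := by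
        have h3 := sq_sum_le_card_mul_sum_sq (s := Finset.univ)
          (f := fun i => ⟪B i, X ω⟫ ^ 2)
        simpa [N] using h3
  _ = N * ∑ i, ⟪B i, X ω⟫ ^ (4:ℕ) := by congr 1; apply Finset.sum_congr rfl; intros; ring

end Vector

lemma pow4_aux {t : ℝ} (ht : 0 ≤ t) : t ^ 2 ≤ (1 + t) ^ 4 ∧ t ^ 4 ≤ (1 + t) ^ 4 := by
  constructor <;> nlinarith [pow_nonneg ht 2, pow_nonneg ht 3, pow_nonneg ht 4, sq_nonneg t]

lemma onet4_aux {t : ℝ} (ht : 0 ≤ t) : (1 + t) ^ 4 ≤ 16 * (1 + t ^ 4) := by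
  nlinarith [sq_nonneg (t - 1), sq_nonneg (t ^ 2 - 1), sq_nonneg (t ^ 2 - t), pow_nonneg ht 3,
    pow_nonneg ht 4, sq_nonneg t]

section Core

variable {d : ℕ} {Ω : Type} [MeasurableSpace Ω] {P : Measure Ω} [IsProbabilityMeasure P]
  {X : Ω → Pr d}

lemma integrable_one_norm_pow_four (hX : Measurable X)
    (hX4 : Integrable (fun ω => ‖X ω‖ ^ (4:ℕ)) P) :
    Integrable (fun ω => (1 + ‖X ω‖) ^ (4:ℕ)) P := by
  refine (((integrable_const (1:ℝ)).add hX4).const_mul 16).mono'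
    (((measurable_const.add hX.norm).pow_const 4).aestronglyMeasurable)
    (Eventually.of_forall fun ω => ?_)
  rw [Real.norm_eq_abs, abs_of_nonneg (by positivity)]
  calc (1 + ‖X ω‖) ^ 4 ≤ 16 * (1 + ‖X ω‖ ^ 4) := onet4_aux (norm_nonneg _)
  _ = 16 * ((fun _ => (1:ℝ)) ω + ‖X ω‖ ^ 4) := rfl

set_option maxHeartbeats 1000000 in
lemma genLoss_hasFDerivAt (hX : Measurable X)
    (hX4 : Integrable (fun ω => ‖X ω‖ ^ (4:ℕ)) P)
    {g gder : ℝ → ℝ} (hg : ∀ x, HasDerivAt g (gder x) x) (hgm : Measurable gder)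
    (hgb : ∀ x, |gder x| ≤ |x| ^ 3 + |x|) (lam : ℝ) (γ : Pr d) :
    ∃ D : Pr d →L[ℝ] ℝ, HasFDerivAt (genLoss P X g lam) D γ ∧
      D γ = (∫ ω, gder ⟪γ, X ω⟫ * ⟪γ, X ω⟫ ∂P) + lam * ((WithLp.equiv 2 (ℝ × Vec d) γ).1) ^ 2 ∧
      Integrable (fun ω => gder ⟪γ, X ω⟫ * ⟪γ, X ω⟫) P := by
  have hgcont : Continuous g := by
    rw [continuous_iff_continuousAt]; exact fun x => (hg x).continuousAt
  set R : ℝ := ‖γ‖ + 1 with hRdef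
  have hR1 : 1 ≤ R := by have := norm_nonneg γ; simp only [hRdef]; linarith
  have hR0 : 0 ≤ R := by linarith
  set F' : Ω → Pr d →L[ℝ] ℝ := fun ω => gder ⟪γ, X ω⟫ • (innerSL ℝ (X ω)) with hF'def
  have hF_meas : ∀ x ∈ Metric.ball γ 1,
      AEStronglyMeasurable (fun ω => g ⟪x, X ω⟫) P :=
    fun x _ => (hgcont.measurable.comp (meas_inner hX x)).aestronglyMeasurable
  have hF_int : Integrable (fun ω => g ⟪γ, X ω⟫) P := by
    refine (((integrable_const |g 0|).add
      ((integrable_one_norm_pow_four hX hX4).const_mul (R ^ 4 + R ^ 2))).mono'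
      ((hgcont.measurable.comp (meas_inner hX γ)).aestronglyMeasurable)
      (Eventually.of_forall fun ω => ?_))
    have hW : |⟪γ, X ω⟫| ≤ ‖γ‖ * ‖X ω‖ := abs_real_inner_le_norm γ (X ω)
    have hWn : (0:ℝ) ≤ |⟪γ, X ω⟫| := abs_nonneg _
    have hgrow := growth_of_deriv hg hgb ⟪γ, X ω⟫
    have hXn : (0:ℝ) ≤ ‖X ω‖ := norm_nonneg _
    have h2 : |⟪γ, X ω⟫| ≤ R * (1 + ‖X ω‖) := by nlinarith
    have h4 : |⟪γ, X ω⟫| ^ 4 ≤ R ^ 4 * (1 + ‖X ω‖) ^ 4 := by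
      have h3 := pow_le_pow_left₀ hWn h2 4
      calc |⟪γ, X ω⟫| ^ 4 ≤ (R * (1 + ‖X ω‖)) ^ 4 := h3
        _ = R ^ 4 * (1 + ‖X ω‖) ^ 4 := by ring
    have h5 : |⟪γ, X ω⟫| ^ 2 ≤ R ^ 2 * (1 + ‖X ω‖) ^ 4 := by
      have h3 := pow_le_pow_left₀ hWn h2 2
      have h6 : (1:ℝ) ≤ 1 + ‖X ω‖ := by linarith
      have h7 : (1 + ‖X ω‖) ^ 2 ≤ (1 + ‖X ω‖) ^ 4 := pow_le_pow_right₀ h6 (by norm_num)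
      calc |⟪γ, X ω⟫| ^ 2 ≤ (R * (1 + ‖X ω‖)) ^ 2 := h3
        _ = R ^ 2 * (1 + ‖X ω‖) ^ 2 := by ring
        _ ≤ R ^ 2 * (1 + ‖X ω‖) ^ 4 := by nlinarith [sq_nonneg R]
    rw [Real.norm_eq_abs]
    calc |g ⟪γ, X ω⟫| ≤ |g 0| + (|⟪γ, X ω⟫| ^ 3 + |⟪γ, X ω⟫|) * |⟪γ, X ω⟫| := hgrow
      _ = |g 0| + (|⟪γ, X ω⟫| ^ 4 + |⟪γ, X ω⟫| ^ 2) := by ring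
      _ ≤ |g 0| + (R ^ 4 + R ^ 2) * (1 + ‖X ω‖) ^ 4 := by nlinarith
  have hF'_meas : AEStronglyMeasurable F' P := by
    have h1 : Measurable fun ω => gder ⟪γ, X ω⟫ := hgm.comp (meas_inner hX γ)
    have h2 : AEStronglyMeasurable (fun ω => innerSL ℝ (X ω)) P :=
      (innerSL ℝ (E := Pr d)).continuous.comp_aestronglyMeasurable hX.aestronglyMeasurable
    exact h1.aestronglyMeasurable.smul h2
  have h_lip : ∀ᵐ ω ∂P, ∀ x ∈ Metric.ball γ 1,
      ‖g ⟪x, X ω⟫ - g ⟪γ, X ω⟫‖ ≤ ((R ^ 3 + R) * (1 + ‖X ω‖) ^ 4) * ‖x - γ‖ := by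
    refine Eventually.of_forall fun ω x hx => ?_
    have hxn : ‖x‖ ≤ R := by
      have h1 := mem_ball_iff_norm.1 hx
      have h2 := abs_norm_sub_norm_le x γ
      rw [abs_le] at h2
      simp only [hRdef]; linarith [h2.1, h2.2]
    have hXn : (0:ℝ) ≤ ‖X ω‖ := norm_nonneg _
    have hmem : ∀ y : Pr d, ‖y‖ ≤ R → ⟪y, X ω⟫ ∈ Set.Icc (-(R * ‖X ω‖)) (R * ‖X ω‖) := by
      intro y hy
      have h1 : |⟪y, X ω⟫| ≤ ‖y‖ * ‖X ω‖ := abs_real_inner_le_norm y (X ω)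
      have h2 : ‖y‖ * ‖X ω‖ ≤ R * ‖X ω‖ := mul_le_mul_of_nonneg_right hy hXn
      rw [Set.mem_Icc, ← abs_le]
      linarith
    have hC : ∀ s ∈ Set.Icc (-(R * ‖X ω‖)) (R * ‖X ω‖),
        ‖gder s‖ ≤ (R * ‖X ω‖) ^ 3 + R * ‖X ω‖ := by
      intro s hs
      have h1 : |s| ≤ R * ‖X ω‖ := abs_le.2 ⟨hs.1, hs.2⟩
      have h3 := pow_le_pow_left₀ (abs_nonneg s) h1 3
      have h4 := hgb s
      rw [Real.norm_eq_abs]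
      linarith
    have hmvt := Convex.norm_image_sub_le_of_norm_hasDerivWithin_le
      (f := g) (f' := gder) (fun y _ => (hg y).hasDerivWithinAt) hC
      (convex_Icc _ _) (hmem γ (by simp [hRdef])) (hmem x hxn)
    have hdiff : ‖⟪x, X ω⟫ - ⟪γ, X ω⟫‖ ≤ ‖X ω‖ * ‖x - γ‖ := by
      rw [← inner_sub_left, Real.norm_eq_abs]
      have h1 := abs_real_inner_le_norm (x - γ) (X ω)
      linarith [mul_comm ‖x - γ‖ ‖X ω‖ ▸ h1]
    have hfinal : ((R * ‖X ω‖) ^ 3 + R * ‖X ω‖) * (‖X ω‖ * ‖x - γ‖)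
        ≤ ((R ^ 3 + R) * (1 + ‖X ω‖) ^ 4) * ‖x - γ‖ := by
      have hp := pow4_aux hXn
      have hR3 : (0:ℝ) ≤ R ^ 3 := by positivity
      have h9 : (R * ‖X ω‖) ^ 3 * ‖X ω‖ + R * ‖X ω‖ * ‖X ω‖
          ≤ (R ^ 3 + R) * (1 + ‖X ω‖) ^ 4 := by
        have e1 : (R * ‖X ω‖) ^ 3 * ‖X ω‖ = R ^ 3 * ‖X ω‖ ^ 4 := by ring
        have e2 : R * ‖X ω‖ * ‖X ω‖ = R * ‖X ω‖ ^ 2 := by ring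
        rw [e1, e2]
        nlinarith [hp.1, hp.2, pow_nonneg (by linarith : (0:ℝ) ≤ 1 + ‖X ω‖) 4]
      calc ((R * ‖X ω‖) ^ 3 + R * ‖X ω‖) * (‖X ω‖ * ‖x - γ‖)
          = ((R * ‖X ω‖) ^ 3 * ‖X ω‖ + R * ‖X ω‖ * ‖X ω‖) * ‖x - γ‖ := by ring
        _ ≤ ((R ^ 3 + R) * (1 + ‖X ω‖) ^ 4) * ‖x - γ‖ :=
            mul_le_mul_of_nonneg_right h9 (norm_nonneg _)
    calc ‖g ⟪x, X ω⟫ - g ⟪γ, X ω⟫‖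
        ≤ ((R * ‖X ω‖) ^ 3 + R * ‖X ω‖) * ‖⟪x, X ω⟫ - ⟪γ, X ω⟫‖ := hmvt
      _ ≤ ((R * ‖X ω‖) ^ 3 + R * ‖X ω‖) * (‖X ω‖ * ‖x - γ‖) :=
          mul_le_mul_of_nonneg_left hdiff (by positivity)
      _ ≤ ((R ^ 3 + R) * (1 + ‖X ω‖) ^ 4) * ‖x - γ‖ := hfinal
  have hbound_int : Integrable (fun ω => (R ^ 3 + R) * (1 + ‖X ω‖) ^ 4) P :=
    (integrable_one_norm_pow_four hX hX4).const_mul _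
  have h_diff : ∀ᵐ ω ∂P, HasFDerivAt (fun x : Pr d => g ⟪x, X ω⟫) (F' ω) γ := by
    refine Eventually.of_forall fun ω => ?_
    have hfun : (fun x : Pr d => ⟪x, X ω⟫) = fun x => (innerSL ℝ (X ω)) x := by
      funext x; exact real_inner_comm _ _
    have hi : HasFDerivAt (fun x : Pr d => ⟪x, X ω⟫) (innerSL ℝ (X ω)) γ := by
      rw [hfun]; exact (innerSL ℝ (X ω)).hasFDerivAt
    exact (hg ⟪γ, X ω⟫).comp_hasFDerivAt γ hi
  have key := hasFDerivAt_integral_of_dominated_loc_of_lip'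
    (F := fun x ω => g ⟪x, X ω⟫) (F' := F') (x₀ := γ) (μ := P)
    (bound := fun ω => (R ^ 3 + R) * (1 + ‖X ω‖) ^ 4)
    (Metric.ball_mem_nhds γ one_pos) hF_meas hF_int hF'_meas h_lip hbound_int h_diff
  obtain ⟨hF'int, hderiv⟩ := key
  set L : Pr d →L[ℝ] ℝ := (ContinuousLinearMap.fst ℝ ℝ (Vec d)).comp
    (WithLp.prodContinuousLinearEquiv 2 ℝ ℝ (Vec d) : Pr d →L[ℝ] ℝ × Vec d) with hLdef
  have hLγ : ∀ x : Pr d, L x = (WithLp.equiv 2 (ℝ × Vec d) x).1 := fun x => rfl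
  have hreg : HasFDerivAt (fun x : Pr d => lam / 2 * (L x) ^ 2)
      ((lam / 2) • (L γ • L + L γ • L)) γ := by
    have h1 : HasFDerivAt (fun x : Pr d => L x * L x) (L γ • L + L γ • L) γ :=
      L.hasFDerivAt.mul L.hasFDerivAt
    have h2 := h1.const_mul (lam / 2)
    refine h2.congr_of_eventuallyEq (Eventually.of_forall fun x => by ring)
  refine ⟨(∫ ω, F' ω ∂P) + ((lam / 2) • (L γ • L + L γ • L)), ?_, ?_, ?_⟩
  · have h3 := hderiv.add hreg
    refine h3.congr_of_eventuallyEq (Eventually.of_forall fun x => ?_)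
    simp only [genLoss, hLγ, Pi.add_apply]
  · rw [ContinuousLinearMap.add_apply, ContinuousLinearMap.integral_apply hF'int]
    congr 1
    · refine integral_congr_ae (Eventually.of_forall fun ω => ?_)
      simp only [hF'def, ContinuousLinearMap.smul_apply, innerSL_apply_apply, smul_eq_mul]
      rw [real_inner_comm]
    · simp only [ContinuousLinearMap.smul_apply, ContinuousLinearMap.add_apply,
        ContinuousLinearMap.smul_apply, smul_eq_mul, hLγ]
      ring
  · have h1 := hF'int.apply_continuousLinearMap γ
    refine h1.congr (Eventually.of_forall fun ω => ?_)
    simp only [hF'def, ContinuousLinearMap.smul_apply, innerSL_apply_apply, smul_eq_mul]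
    rw [real_inner_comm]

end Core

section Moment

variable {d : ℕ} {Ω : Type} [MeasurableSpace Ω] {P : Measure Ω} [IsProbabilityMeasure P]
  {X : Ω → Pr d} {M σ : ℝ}

set_option maxHeartbeats 1000000 in
lemma abs_moment_lower (hM : 0 < M) (hσ : 0 < σ) (hX : Measurable X)
    (hmom : ∀ u : Pr d, ‖u‖ = 1 → ∀ p : ℝ, 1 ≤ p →
      Integrable (fun ω => |⟪u, X ω⟫| ^ p) P ∧
        (∫ ω, |⟪u, X ω⟫| ^ p ∂P) ^ (1 / p) ≤ Real.sqrt p * M)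
    (hvar : ∀ u : Pr d, σ ^ 2 * ‖u‖ ^ 2 ≤ ∫ ω, ⟪u, X ω⟫ ^ 2 ∂P)
    {u : Pr d} (hu : ‖u‖ = 1) :
    σ ^ 4 / (8 * M ^ 3) ≤ ∫ ω, |⟪u, X ω⟫| ∂P := by
  have hVm : Measurable (fun ω => ⟪u, X ω⟫) := meas_inner hX u
  have hInt1 : Integrable (fun ω => |⟪u, X ω⟫|) P := by
    have h := (hmom u hu 1 le_rfl).1
    refine h.congr (Eventually.of_forall fun ω => ?_)
    exact Real.rpow_one _
  have hInt3 : Integrable (fun ω => |⟪u, X ω⟫| ^ (3:ℕ)) P := by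
    have h := (hmom u hu 3 (by norm_num)).1
    refine h.congr (Eventually.of_forall fun ω => ?_)
    beta_reduce
    rw [← Real.rpow_natCast (|⟪u, X ω⟫|) 3]
    norm_num
  set A : ℝ := ∫ ω, |⟪u, X ω⟫| ∂P with hAdef
  set B : ℝ := ∫ ω, |⟪u, X ω⟫| ^ (3:ℕ) ∂P with hBdef
  have hA0 : 0 ≤ A := integral_nonneg fun ω => abs_nonneg _
  have hB0 : 0 ≤ B := integral_nonneg fun ω => by positivity
  have hB8 : B ≤ 8 * M ^ 3 := by
    have h := (hmom u hu 3 (by norm_num)).2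
    have heq : (∫ ω, |⟪u, X ω⟫| ^ (3:ℝ) ∂P) = B := by
      rw [hBdef]
      refine integral_congr_ae (Eventually.of_forall fun ω => ?_)
      beta_reduce
      rw [← Real.rpow_natCast (|⟪u, X ω⟫|) 3]
      norm_num
    rw [heq] at h
    have hs3 : Real.sqrt 3 ≤ 2 := by
      nlinarith [Real.sq_sqrt (by norm_num : (0:ℝ) ≤ 3), Real.sqrt_nonneg 3]
    have h2 : B ^ ((1:ℝ)/3) ≤ 2 * M := le_trans h (by nlinarith [Real.sqrt_nonneg 3])
    have h3 : (B ^ ((1:ℝ)/3)) ^ (3:ℕ) ≤ (2 * M) ^ (3:ℕ) :=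
      pow_le_pow_left₀ (Real.rpow_nonneg hB0 _) h2 3
    have h4 : (B ^ ((1:ℝ)/3)) ^ (3:ℕ) = B := by
      rw [← Real.rpow_natCast (B ^ ((1:ℝ)/3)) 3, ← Real.rpow_mul hB0]
      norm_num
    rw [h4] at h3
    calc B ≤ (2 * M) ^ 3 := h3
      _ = 8 * M ^ 3 := by ring
  have hf : MemLp (fun ω => |⟪u, X ω⟫| ^ ((1:ℝ)/2)) (ENNReal.ofReal 2) P := by
    rw [show ENNReal.ofReal 2 = 2 by norm_num]
    refine (memLp_two_iff_integrable_sq ?_).2 ?_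
    · exact (hVm.abs.pow_const _).aestronglyMeasurable
    · refine hInt1.congr (Eventually.of_forall fun ω => ?_)
      beta_reduce
      rw [← Real.rpow_natCast (|⟪u, X ω⟫| ^ ((1:ℝ)/2)) 2, ← Real.rpow_mul (abs_nonneg _)]
      norm_num
  have hg : MemLp (fun ω => |⟪u, X ω⟫| ^ ((3:ℝ)/2)) (ENNReal.ofReal 2) P := by
    rw [show ENNReal.ofReal 2 = 2 by norm_num]
    refine (memLp_two_iff_integrable_sq ?_).2 ?_
    · exact (hVm.abs.pow_const _).aestronglyMeasurable
    · refine hInt3.congr (Eventually.of_forall fun ω => ?_)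
      beta_reduce
      rw [← Real.rpow_natCast (|⟪u, X ω⟫| ^ ((3:ℝ)/2)) 2, ← Real.rpow_mul (abs_nonneg _),
        ← Real.rpow_natCast (|⟪u, X ω⟫|) 3]
      norm_num
  have hcs := integral_mul_le_Lp_mul_Lq_of_nonneg (μ := P)
    (Real.HolderConjugate.two_two : Real.HolderConjugate 2 2)
    (Eventually.of_forall fun ω => Real.rpow_nonneg (abs_nonneg _) _)
    (Eventually.of_forall fun ω => Real.rpow_nonneg (abs_nonneg _) _) hf hg
  have hlhs : (∫ ω, |⟪u, X ω⟫| ^ ((1:ℝ)/2) * |⟪u, X ω⟫| ^ ((3:ℝ)/2) ∂P)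
      = ∫ ω, ⟪u, X ω⟫ ^ 2 ∂P := by
    refine integral_congr_ae (Eventually.of_forall fun ω => ?_)
    beta_reduce
    rw [← Real.rpow_add' (abs_nonneg _) (by norm_num),
      show ((1:ℝ)/2 + 3/2) = ((2:ℕ):ℝ) by norm_num, Real.rpow_natCast, sq_abs]
  have hrf : (∫ ω, (|⟪u, X ω⟫| ^ ((1:ℝ)/2)) ^ (2:ℝ) ∂P) = A := by
    rw [hAdef]
    refine integral_congr_ae (Eventually.of_forall fun ω => ?_)
    beta_reduce
    rw [← Real.rpow_mul (abs_nonneg _)]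
    norm_num
  have hrg : (∫ ω, (|⟪u, X ω⟫| ^ ((3:ℝ)/2)) ^ (2:ℝ) ∂P) = B := by
    rw [hBdef]
    refine integral_congr_ae (Eventually.of_forall fun ω => ?_)
    beta_reduce
    rw [← Real.rpow_mul (abs_nonneg _), ← Real.rpow_natCast (|⟪u, X ω⟫|) 3]
    norm_num
  rw [hlhs, hrf, hrg] at hcs
  have hvar2 : σ ^ 2 ≤ ∫ ω, ⟪u, X ω⟫ ^ 2 ∂P := by
    have := hvar u
    rwa [hu, one_pow, mul_one] at this
  have hσ2 : σ ^ 2 ≤ A ^ ((1:ℝ)/2) * B ^ ((1:ℝ)/2) := by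
    calc σ ^ 2 ≤ ∫ ω, ⟪u, X ω⟫ ^ 2 ∂P := hvar2
      _ ≤ A ^ ((1:ℝ)/2) * B ^ ((1:ℝ)/2) := by
          have h12 : (1:ℝ)/2 = 1/(2:ℝ) := by norm_num
          simpa [h12] using hcs
  have hsq : σ ^ 4 ≤ A * B := by
    have h1 : (σ ^ 2) ^ 2 ≤ (A ^ ((1:ℝ)/2) * B ^ ((1:ℝ)/2)) ^ 2 := by
      have h0 : (0:ℝ) ≤ σ ^ 2 := sq_nonneg σ
      nlinarith [hσ2, mul_nonneg (Real.rpow_nonneg hA0 ((1:ℝ)/2)) (Real.rpow_nonneg hB0 ((1:ℝ)/2))]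
    have h2 : (A ^ ((1:ℝ)/2) * B ^ ((1:ℝ)/2)) ^ 2 = A * B := by
      rw [mul_pow, ← Real.rpow_natCast (A ^ ((1:ℝ)/2)) 2, ← Real.rpow_natCast (B ^ ((1:ℝ)/2)) 2,
        ← Real.rpow_mul hA0, ← Real.rpow_mul hB0]
      norm_num
    calc σ ^ 4 = (σ ^ 2) ^ 2 := by ring
      _ ≤ (A ^ ((1:ℝ)/2) * B ^ ((1:ℝ)/2)) ^ 2 := h1
      _ = A * B := h2
  have hM3 : (0:ℝ) < 8 * M ^ 3 := by positivity
  rw [div_le_iff₀ hM3]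
  calc σ ^ 4 ≤ A * B := hsq
    _ ≤ A * (8 * M ^ 3) := mul_le_mul_of_nonneg_left hB8 hA0

section Main

variable {d : ℕ} {Ω : Type} [MeasurableSpace Ω] {P : Measure Ω} [IsProbabilityMeasure P]
  {X : Ω → Pr d} {M σ : ℝ}

set_option maxHeartbeats 1000000 in
lemma grad_lb (hM : 0 < M) (hσ : 0 < σ) (hX : Measurable X)
    (hmom : ∀ u : Pr d, ‖u‖ = 1 → ∀ p : ℝ, 1 ≤ p →
      Integrable (fun ω => |⟪u, X ω⟫| ^ p) P ∧
        (∫ ω, |⟪u, X ω⟫| ^ p ∂P) ^ (1 / p) ≤ Real.sqrt p * M)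
    (hvar : ∀ u : Pr d, σ ^ 2 * ‖u‖ ^ 2 ≤ ∫ ω, ⟪u, X ω⟫ ^ 2 ∂P)
    {g gder : ℝ → ℝ} (hg : ∀ x, HasDerivAt g (gder x) x) (hgm : Measurable gder)
    (hgb : ∀ x, |gder x| ≤ |x| ^ 3 + |x|)
    (hgmul : ∀ x, 6 * |x| - 13 ≤ gder x * x)
    {lam : ℝ} (hlam : 0 ≤ lam) (γ : Pr d)
    (hγ : 3 / (σ ^ 4 / (16 * M ^ 3)) ≤ ‖γ‖) :
    σ ^ 4 / (16 * M ^ 3) ≤ ‖gradient (genLoss P X g lam) γ‖ := by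
  set m : ℝ := σ ^ 4 / (16 * M ^ 3) with hmdef
  have hm : 0 < m := by positivity
  have hγpos : 0 < ‖γ‖ := lt_of_lt_of_le (by positivity) hγ
  have hγne : γ ≠ 0 := norm_pos_iff.1 hγpos
  have hmγ : 3 ≤ m * ‖γ‖ := by
    rw [div_le_iff₀ hm] at hγ; linarith [hγ]
  set u : Pr d := ‖γ‖⁻¹ • γ with hudef
  have hu : ‖u‖ = 1 := norm_smul_inv_norm hγne
  have hγu : ∀ v : Pr d, ⟪γ, v⟫ = ‖γ‖ * ⟪u, v⟫ := by
    intro v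
    have h1 : (‖γ‖ : ℝ) • u = γ := smul_inv_smul₀ (norm_ne_zero_iff.2 hγne) γ
    conv_lhs => rw [← h1]
    rw [real_inner_smul_left]
  have hX4 := integrable_norm_pow_four hX hmom
  obtain ⟨D, hD, hDγ, hIntg⟩ := genLoss_hasFDerivAt hX hX4 hg hgm hgb lam γ
  have hInt1 : Integrable (fun ω => |⟪u, X ω⟫|) P := by
    have h := (hmom u hu 1 le_rfl).1
    refine h.congr (Eventually.of_forall fun ω => ?_)
    exact Real.rpow_one _
  set A : ℝ := ∫ ω, |⟪u, X ω⟫| ∂P with hAdef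
  have hA : σ ^ 4 / (8 * M ^ 3) ≤ A := abs_moment_lower hM hσ hX hmom hvar hu
  have hc2m : σ ^ 4 / (8 * M ^ 3) = 2 * m := by rw [hmdef]; ring
  have hIntW : Integrable (fun ω => |⟪γ, X ω⟫|) P := by
    refine (hInt1.const_mul ‖γ‖).congr (Eventually.of_forall fun ω => ?_)
    beta_reduce
    rw [hγu (X ω), abs_mul, abs_of_nonneg (norm_nonneg γ)]
  have hWA : (∫ ω, |⟪γ, X ω⟫| ∂P) = ‖γ‖ * A := by
    rw [hAdef, ← integral_const_mul]
    refine integral_congr_ae (Eventually.of_forall fun ω => ?_)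
    beta_reduce
    rw [hγu (X ω), abs_mul, abs_of_nonneg (norm_nonneg γ)]
  have hmono : (∫ ω, 6 * |⟪γ, X ω⟫| - 13 ∂P) ≤ ∫ ω, gder ⟪γ, X ω⟫ * ⟪γ, X ω⟫ ∂P := by
    refine integral_mono ((hIntW.const_mul 6).sub (integrable_const 13)) hIntg ?_
    intro ω
    exact hgmul _
  have hval : (∫ ω, 6 * |⟪γ, X ω⟫| - 13 ∂P) = 6 * (‖γ‖ * A) - 13 := by
    rw [integral_sub (hIntW.const_mul 6) (integrable_const 13), integral_const_mul, hWA]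
    simp [measure_univ]
  have hDlow : m * ‖γ‖ ≤ D γ := by
    rw [hDγ]
    have h1 : 0 ≤ lam * ((WithLp.equiv 2 (ℝ × Vec d) γ).1) ^ 2 :=
      mul_nonneg hlam (sq_nonneg _)
    have h2 : 2 * m ≤ A := by rw [← hc2m]; exact hA
    have h3 : 6 * (‖γ‖ * A) - 13 ≤ ∫ ω, gder ⟪γ, X ω⟫ * ⟪γ, X ω⟫ ∂P := hval ▸ hmono
    have h4 : 6 * (‖γ‖ * (2 * m)) ≤ 6 * (‖γ‖ * A) := by nlinarith
    nlinarith
  have hnorm : ‖gradient (genLoss P X g lam) γ‖ = ‖D‖ := by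
    rw [gradient, hD.fderiv]
    exact LinearIsometryEquiv.norm_map _ _
  rw [hnorm]
  have h5 := D.le_opNorm γ
  have h6 : D γ ≤ ‖D γ‖ := le_abs_self _
  have h7 : m * ‖γ‖ ≤ ‖D‖ * ‖γ‖ := by linarith
  exact le_of_mul_le_mul_right (by linarith [h7]) hγpos

end Main

/-- if `‖X‖_{ψ₂} ≤ M` and `E(XX⊤) ⪰ σ²I`, and `b ≥ 2a ≥ 4`, then there is
`m > 0` depending only on `M` and `σ` such that `‖∇L_λ(γ)‖₂ ≥ m` and `‖∇L^h_λ(γ)‖₂ ≥ m`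
for every `γ` with `‖γ‖₂ ≥ 3/m`. -/
theorem population_gradient_lower_bound_far_away (M σ : ℝ) (hM : 0 < M) (hσ : 0 < σ) :
    ∃ m : ℝ, 0 < m ∧
      ∀ (d : ℕ) (Ω : Type) [MeasurableSpace Ω] (P : Measure Ω) [IsProbabilityMeasure P]
        (X : Ω → Pr d) (lam a b : ℝ),
        2 ≤ a → 2 * a ≤ b → 0 ≤ lam →
        Measurable X →
        (∀ u : Pr d, ‖u‖ = 1 → ∀ p : ℝ, 1 ≤ p →
          Integrable (fun ω => |⟪u, X ω⟫| ^ p) P ∧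
            (∫ ω, |⟪u, X ω⟫| ^ p ∂P) ^ (1 / p) ≤ Real.sqrt p * M) →
        (∀ u : Pr d, σ ^ 2 * ‖u‖ ^ 2 ≤ ∫ ω, ⟪u, X ω⟫ ^ 2 ∂P) →
        ∀ γ : Pr d, 3 / m ≤ ‖γ‖ →
          m ≤ ‖gradient (genLoss P X (fclip a b) lam) γ‖ ∧
          m ≤ ‖gradient (genLoss P X hq lam) γ‖ := by
  refine ⟨σ ^ 4 / (16 * M ^ 3), by positivity, ?_⟩
  intro d Ω _ P _ X lam a b ha hb hlam hX hmom hvar γ hγ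
  have hab2 : (0:ℝ) < a := by linarith
  have hab : a < b := by linarith
  constructor
  · exact grad_lb hM hσ hX hmom hvar (fclip_hasDerivAt hab2 hab) (fder_measurable a b)
      (fder_abs_ub ha hb) (fder_mul_lb ha hb) hlam γ hγ
  · exact grad_lb (g := hq) (gder := fun x => x ^ 3 - x) hM hσ hX hmom hvar hq_hasDerivAt
      (by fun_prop) hqder_abs_ub hqder_mul_lb hlam γ hγ
end Moment
end

section
/- Under the centered model, let f ∈ C²(ℝ) be an even function with sup_{x∈ℝ}|f″(x)| < ∞, lim_{x→+∞} x f′(x) = +∞ and f″(0) < 0, and assume in addition that f″ is locally Lipschitz with |f‴(x)| ≤ F₃ < ∞ for almost every x. For λ ≥ 0 define L_λ(α, β) = E f(α + β^⊤X) + (λ/2)α², and set W = ‖μ‖₂Y + (μ/‖μ‖₂)^⊤Z (so that E W² = ‖μ‖₂² + 1 and E|W|³ < ∞). Then every c > 0 such that (0, c·μ/‖μ‖₂) is a critical point of L_λ satisfies c ≥ −f″(0)(‖μ‖₂² + 1)/(F₃·E|W|³). -/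
open MeasureTheory ProbabilityTheory
open Set
open scoped RealInnerProductSpace

/-- Build the point `(α, β) ∈ ℝ × ℝ^d`. -/
noncomputable def mkp {d : ℕ} (α : ℝ) (β : Vec d) : Pr d :=
  (WithLp.equiv 2 (ℝ × Vec d)).symm (α, β)

/-- The population loss `γ = (α, β) ↦ E g(α + β⊤X) + (λ/2) α²` built from a scalar loss `g`. -/
noncomputable def popLoss {d : ℕ} {Ω : Type*} [MeasurableSpace Ω] (P : Measure Ω)
    (X : Ω → Vec d) (g : ℝ → ℝ) (lam : ℝ) (γ : Pr d) : ℝ :=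
  (∫ ω, g ((WithLp.equiv 2 (ℝ × Vec d) γ).1 + ⟪(WithLp.equiv 2 (ℝ × Vec d) γ).2, X ω⟫) ∂P)
    + lam / 2 * ((WithLp.equiv 2 (ℝ × Vec d) γ).1) ^ 2

private lemma deriv_zero_of_even {f : ℝ → ℝ} (he : ∀ x, f (-x) = f x) : deriv f 0 = 0 := by
  have h2 := deriv_comp_neg (f := f) (x := (0 : ℝ))
  have h : (fun x => f (-x)) = f := funext he
  rw [h] at h2
  simp only [neg_zero] at h2
  linarith

private lemma mvt_abs {g : ℝ → ℝ} {B : ℝ} (hg : Differentiable ℝ g) (x : ℝ)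
    (hbd : ∀ t, |t| ≤ |x| → |deriv g t| ≤ B) :
    |g x - g 0| ≤ B * |x| := by
  rcases lt_trichotomy x 0 with hx | hx | hx
  · obtain ⟨ξ, hξ, hs⟩ := exists_deriv_eq_slope g hx hg.continuous.continuousOn
      hg.differentiableOn
    have hξx : |ξ| ≤ |x| := by
      rw [abs_of_neg hx, abs_of_neg hξ.2]; linarith [hξ.1]
    have hgx : g 0 - g x = deriv g ξ * (0 - x) := by
      rw [show (0:ℝ) - x = -x by ring] at hs ⊢
      have h := (div_eq_iff (by linarith : (-x:ℝ) ≠ 0)).mp hs.symm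
      linarith [h]
    have h2 : |g x - g 0| = |deriv g ξ| * |x| := by
      rw [← abs_neg (g x - g 0), show -(g x - g 0) = deriv g ξ * (0 - x) from by
        linarith [hgx], abs_mul]
      congr 1
      rw [show (0:ℝ) - x = -x by ring, abs_neg, abs_of_neg hx]
    rw [h2]
    exact mul_le_mul_of_nonneg_right (hbd ξ hξx) (abs_nonneg _)
  · simp only [hx, abs_zero, mul_zero, sub_self]
    simp
  · obtain ⟨ξ, hξ, hs⟩ := exists_deriv_eq_slope g hx hg.continuous.continuousOn
      hg.differentiableOn
    have hξx : |ξ| ≤ |x| := by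
      rw [abs_of_pos hx, abs_of_pos hξ.1]; linarith [hξ.2]
    have : g x - g 0 = deriv g ξ * x := by
      field_simp at hs; linarith [hs]
    rw [this, abs_mul]
    exact mul_le_mul_of_nonneg_right (hbd ξ hξx) (abs_nonneg _)

set_option maxHeartbeats 4000000 in
set_option synthInstance.maxHeartbeats 1000000 in
/-- under the centered model, for any even `f ∈ C²(ℝ)` with bounded second
derivative, `x f'(x) → +∞`, `f''(0) < 0`, and `f''` Lipschitz with constant `F₃` (so
`|f'''| ≤ F₃` a.e.), every `c > 0` making `(0, c·μ/‖μ‖₂)` a critical point of `L_λ` satisfies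
`c ≥ −f''(0)(‖μ‖₂² + 1)/(F₃ · E|W|³)`, where `W = ‖μ‖₂ Y + (μ/‖μ‖₂)⊤Z`. -/
theorem critical_points_on_signal_line_lower_bound
    {d : ℕ} {Ω : Type*} [MeasurableSpace Ω] (P : Measure Ω) [IsProbabilityMeasure P]
    (Y : Ω → ℝ) (Z : Ω → Vec d) (X : Ω → Vec d) (μ : Vec d) (M lam : ℝ)
    (hμ : μ ≠ 0) (hlam : 0 ≤ lam)
    (hY : Measurable Y) (hZ : Measurable Z)
    (hYpm : ∀ ω, Y ω = 1 ∨ Y ω = -1)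
    (hY1 : P {ω | Y ω = 1} = 1 / 2) (hY2 : P {ω | Y ω = -1} = 1 / 2)
    (hindep : IndepFun Y Z P)
    (hZsg : ∀ u : Vec d, ‖u‖ = 1 → ∀ p : ℝ, 1 ≤ p →
      Integrable (fun ω => |⟪u, Z ω⟫| ^ p) P ∧
        (∫ ω, |⟪u, Z ω⟫| ^ p ∂P) ^ (1 / p) ≤ Real.sqrt p * M)
    (hZmean : (∫ ω, Z ω ∂P) = 0)
    (hZcov : ∀ u v : Vec d, (∫ ω, ⟪u, Z ω⟫ * ⟪v, Z ω⟫ ∂P) = ⟪u, v⟫)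
    (hZsym : ∀ O : Vec d ≃ₗᵢ[ℝ] Vec d,
      Measure.map (fun ω => O (Z ω)) P = Measure.map Z P)
    (hX : ∀ ω, X ω = Y ω • μ + Z ω)
    (f : ℝ → ℝ) (hf : ContDiff ℝ 2 f) (hfeven : ∀ x, f (-x) = f x)
    (hf2bdd : ∃ F₂ : ℝ, ∀ x, |deriv (deriv f) x| ≤ F₂)
    (hflim : Filter.Tendsto (fun x => x * deriv f x) Filter.atTop Filter.atTop)
    (hf20 : deriv (deriv f) 0 < 0)
    (F₃ : ℝ) (hF₃ : 0 ≤ F₃)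
    (hfLip : LipschitzWith (Real.toNNReal F₃) (deriv (deriv f))) :
    ∀ c : ℝ, 0 < c →
      gradient (popLoss P X f lam) (mkp 0 (c • (‖μ‖⁻¹ • μ))) = 0 →
      -(deriv (deriv f) 0) * (‖μ‖ ^ 2 + 1) /
          (F₃ * ∫ ω, |‖μ‖ * Y ω + ⟪‖μ‖⁻¹ • μ, Z ω⟫| ^ 3 ∂P) ≤ c := by
  intro c hc hgrad
  -- smoothness bookkeeping
  have h11 : ContDiff ℝ (1 + 1) f := by norm_num; exact hf
  obtain ⟨hfd, -, hf1⟩ := contDiff_succ_iff_deriv.mp h11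
  obtain ⟨hfd2, hfc2⟩ := contDiff_one_iff_deriv.mp hf1
  have hfc1 : Continuous (deriv f) := hf1.continuous
  obtain ⟨F₂, hF₂⟩ := hf2bdd
  have hF₂0 : 0 ≤ F₂ := le_trans (abs_nonneg _) (hF₂ 0)
  have hf'0 : deriv f 0 = 0 := deriv_zero_of_even hfeven
  set A := deriv (deriv f) 0 with hA
  -- growth bounds for deriv f and f
  have hgrow1 : ∀ x, |deriv f x| ≤ F₂ * |x| := by
    intro x
    have := mvt_abs hfd2 x (fun t _ => hF₂ t)
    rwa [hf'0, sub_zero] at this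
  have hgrowf : ∀ x, |f x - f 0| ≤ F₂ * x ^ 2 := by
    intro x
    have h := mvt_abs hfd x (B := F₂ * |x|) (fun t ht =>
      le_trans (hgrow1 t) (by nlinarith [abs_nonneg t]))
    calc |f x - f 0| ≤ F₂ * |x| * |x| := h
      _ = F₂ * x ^ 2 := by rw [mul_assoc, abs_mul_abs_self, sq]
  have htaylor : ∀ x, |deriv f x - A * x| ≤ F₃ * x ^ 2 := by
    intro x
    have hdg : Differentiable ℝ (fun t => deriv f t - A * t) :=
      hfd2.sub (differentiable_id.const_mul A)
    have hb : ∀ t, |t| ≤ |x| → |deriv (fun t => deriv f t - A * t) t| ≤ F₃ * |x| := by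
      intro t ht
      have hd : deriv (fun t => deriv f t - A * t) t = deriv (deriv f) t - A := by
        rw [deriv_fun_sub (hfd2 t) (by fun_prop)]
        have hA' : deriv (fun y : ℝ => A * y) t = A := by
          simpa using ((hasDerivAt_id t).const_mul A).deriv
        rw [hA']
      rw [hd]
      have hl := hfLip.dist_le_mul t 0
      rw [Real.dist_eq, Real.dist_eq, sub_zero, Real.coe_toNNReal F₃ hF₃] at hl
      calc |deriv (deriv f) t - A| ≤ F₃ * |t| := hl
        _ ≤ F₃ * |x| := by nlinarith
    have h := mvt_abs hdg x hb
    simp only [hf'0, mul_zero, sub_zero, zero_sub, abs_neg] at h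
    calc |deriv f x - A * x| ≤ F₃ * |x| * |x| := by
          have : |deriv f x - A * x - 0| ≤ F₃ * |x| * |x| := by
            simpa [sub_zero] using h
          simpa using this
      _ = F₃ * x ^ 2 := by rw [mul_assoc, abs_mul_abs_self, sq]
  -- geometric setup
  set u : Vec d := ‖μ‖⁻¹ • μ with hu_def
  have hμn : ‖μ‖ ≠ 0 := norm_ne_zero_iff.mpr hμ
  have hu : ‖u‖ = 1 := by
    rw [hu_def, norm_smul, norm_inv, norm_norm]
    field_simp
  set g : Ω → ℝ := fun ω => ⟪u, Z ω⟫ with hg_def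
  set W : Ω → ℝ := fun ω => ‖μ‖ * Y ω + g ω with hW_def
  have huμ : ⟪u, μ⟫ = ‖μ‖ := by
    rw [hu_def, real_inner_smul_left, real_inner_self_eq_norm_sq, sq]
    field_simp
  have huX : ∀ ω, ⟪u, X ω⟫ = W ω := by
    intro ω
    rw [hX ω, inner_add_right, real_inner_smul_right, huμ, hW_def]
    ring_nf
    rfl
  -- measurability
  have hXm : Measurable X := by
    have : X = fun ω => Y ω • μ + Z ω := funext hX
    rw [this]
    exact (hY.smul_const μ).add hZ
  have hgm : Measurable g := Measurable.inner measurable_const hZ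
  have hWm : Measurable W := (measurable_const.mul hY).add hgm
  -- integrability of powers of g
  have hrp2 : ∀ h : Ω → ℝ, (fun ω => |h ω| ^ (2:ℝ)) = fun ω => h ω ^ 2 := by
    intro h; funext ω
    rw [show (2:ℝ) = ((2:ℕ):ℝ) by norm_num, Real.rpow_natCast, sq_abs]
  have hrp3 : ∀ h : Ω → ℝ, (fun ω => |h ω| ^ (3:ℝ)) = fun ω => |h ω| ^ 3 := by
    intro h; funext ω
    rw [show (3:ℝ) = ((3:ℕ):ℝ) by norm_num, Real.rpow_natCast]
  have hgi2 : Integrable (fun ω => g ω ^ 2) P := by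
    have := (hZsg u hu 2 one_le_two).1
    rwa [hrp2] at this
  have hgi3 : Integrable (fun ω => |g ω| ^ 3) P := by
    have := (hZsg u hu 3 (by norm_num)).1
    rwa [hrp3] at this
  have hgiabs : Integrable (fun ω => |g ω|) P := by
    have := (hZsg u hu 1 le_rfl).1
    simpa using this
  have hgi1 : Integrable g P := by
    refine (integrable_norm_iff hgm.aestronglyMeasurable).mp ?_
    simpa [Real.norm_eq_abs] using hgiabs
  -- integrability of Z and its mean
  have hZcoord : ∀ i : Fin d, Integrable (fun ω => (Z ω i) ^ 2) P := by
    intro i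
    have h := (hZsg (EuclideanSpace.single i 1) (by simp) 2 one_le_two).1
    have he : (fun ω => |⟪EuclideanSpace.single i (1:ℝ), Z ω⟫| ^ (2:ℝ))
        = fun ω => (Z ω i) ^ 2 := by
      funext ω
      rw [show (2:ℝ) = ((2:ℕ):ℝ) by norm_num, Real.rpow_natCast, sq_abs,
        EuclideanSpace.inner_single_left]
      simp
    rwa [he] at h
  have hzn2 : Integrable (fun ω => ‖Z ω‖ ^ 2) P := by
    have he : (fun ω => ‖Z ω‖ ^ 2) = fun ω => ∑ i, (Z ω i) ^ 2 := by
      funext ω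
      rw [EuclideanSpace.norm_eq, Real.sq_sqrt (by positivity)]
      simp [sq_abs]
    rw [he]
    exact integrable_finset_sum _ fun i _ => hZcoord i
  have hZint : Integrable Z P := by
    refine ((integrable_const (1:ℝ)).add hzn2).mono' hZ.aestronglyMeasurable ?_
    filter_upwards with ω
    have := norm_nonneg (Z ω)
    simp only [Pi.add_apply]
    nlinarith
  have hgmean : ∫ ω, g ω ∂P = 0 := by
    rw [hg_def]
    simp only []
    rw [integral_inner hZint u, hZmean, inner_zero_right]
  -- Y facts
  have hYabs : ∀ ω, |Y ω| = 1 := by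
    intro ω; rcases hYpm ω with h | h <;> simp [h]
  have hYint : Integrable Y P := by
    refine (integrable_const (1:ℝ)).mono' hY.aestronglyMeasurable ?_
    filter_upwards with ω
    rw [Real.norm_eq_abs, hYabs ω]
  have hYgind : IndepFun Y g P :=
    hindep.comp measurable_id (Measurable.inner measurable_const measurable_id)
  have hYg_int : Integrable (fun ω => Y ω * g ω) P :=
    hgi1.bdd_mul (c := 1) hY.aestronglyMeasurable (Filter.Eventually.of_forall fun ω => by rw [Real.norm_eq_abs, hYabs ω])
  have hYg : ∫ ω, Y ω * g ω ∂P = 0 := by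
    calc ∫ ω, Y ω * g ω ∂P = (∫ ω, Y ω ∂P) * ∫ ω, g ω ∂P :=
          hYgind.integral_fun_mul_eq_mul_integral hYint.aestronglyMeasurable hgi1.aestronglyMeasurable
      _ = 0 := by rw [hgmean, mul_zero]
  have hg2 : ∫ ω, g ω ^ 2 ∂P = 1 := by
    have h := hZcov u u
    rw [real_inner_self_eq_norm_sq, hu] at h
    have he : (fun ω => g ω ^ 2) = fun ω => ⟪u, Z ω⟫ * ⟪u, Z ω⟫ := by
      funext ω; rw [sq]
    rw [he, h]
    norm_num
  -- second moment of W
  have hWsq : ∀ ω, W ω ^ 2 = ‖μ‖ ^ 2 + (2 * ‖μ‖) * (Y ω * g ω) + g ω ^ 2 := by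
    intro ω
    rcases hYpm ω with h | h <;> simp only [hW_def, h] <;> ring
  have hWint2 : Integrable (fun ω => W ω ^ 2) P := by
    rw [funext hWsq]
    exact ((integrable_const _).add (hYg_int.const_mul _)).add hgi2
  have hW2 : ∫ ω, W ω ^ 2 ∂P = ‖μ‖ ^ 2 + 1 := by
    have e0 : ∫ ω, W ω ^ 2 ∂P = ∫ ω, (‖μ‖^2 + 2*‖μ‖*(Y ω * g ω)) + g ω^2 ∂P :=
      integral_congr_ae (Filter.Eventually.of_forall fun ω => hWsq ω)
    have e1 : ∫ ω, (‖μ‖^2 + 2*‖μ‖*(Y ω * g ω)) + g ω^2 ∂P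
        = (∫ ω, ‖μ‖^2 + 2*‖μ‖*(Y ω * g ω) ∂P) + ∫ ω, g ω^2 ∂P :=
      integral_add ((integrable_const _).add (hYg_int.const_mul _)) hgi2
    have e2 : ∫ ω, ‖μ‖^2 + 2*‖μ‖*(Y ω * g ω) ∂P
        = (∫ _ω, (‖μ‖^2 : ℝ) ∂P) + ∫ ω, 2*‖μ‖*(Y ω * g ω) ∂P :=
      integral_add (integrable_const _) (hYg_int.const_mul _)
    rw [e0, e1, e2, integral_const_mul, hYg, hg2, integral_const]
    simp
  -- third absolute moment of W
  have habsW : ∀ ω, |W ω| ≤ ‖μ‖ + |g ω| := by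
    intro ω
    calc |W ω| ≤ |‖μ‖ * Y ω| + |g ω| := abs_add_le _ _
      _ = ‖μ‖ + |g ω| := by rw [abs_mul, hYabs ω, abs_of_nonneg (norm_nonneg μ), mul_one]
  have hWm3 : Measurable (fun ω => |W ω| ^ 3) := (hWm.abs.pow_const 3)
  have hWint3 : Integrable (fun ω => |W ω| ^ 3) P := by
    refine Integrable.mono'
      (g := fun ω => ‖μ‖^3 + 3*‖μ‖^2*|g ω| + 3*‖μ‖*(g ω^2) + |g ω|^3)
      ?_ hWm3.aestronglyMeasurable ?_
    · exact (((integrable_const _).add (hgiabs.const_mul _)).add (hgi2.const_mul _)).add hgi3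
    · filter_upwards with ω
      rw [Real.norm_eq_abs, abs_of_nonneg (by positivity)]
      calc |W ω| ^ 3 ≤ (‖μ‖ + |g ω|) ^ 3 :=
            pow_le_pow_left₀ (abs_nonneg _) (habsW ω) 3
        _ = ‖μ‖^3 + 3*‖μ‖^2*|g ω| + 3*‖μ‖*(g ω^2) + |g ω|^3 := by
            rw [← sq_abs (g ω)]; ring
  -- points in parameter space
  set x₀ : Pr d := mkp 0 (c • u) with hx₀_def
  set v₀ : Pr d := mkp 0 u with hv₀_def
  set e₀ : Pr d := mkp 1 0 with he₀_def
  set p : Ω → Pr d := fun ω => mkp 1 (X ω) with hp_def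
  have hinner : ∀ (a : ℝ) (q : Vec d) (γ : Pr d),
      ⟪mkp a q, γ⟫ = a * (WithLp.equiv 2 (ℝ × Vec d) γ).1
        + ⟪q, (WithLp.equiv 2 (ℝ × Vec d) γ).2⟫ := by
    intro a q γ
    rw [WithLp.prod_inner_apply]
    simp [mkp, RCLike.inner_apply]
    ring
  have hmk : ∀ (a : ℝ) (q : Vec d), (WithLp.equiv 2 (ℝ × Vec d) (mkp a q)) = (a, q) := by
    intro a q; simp [mkp]
  have hpγ : ∀ (ω : Ω) (γ : Pr d), ⟪p ω, γ⟫
      = (WithLp.equiv 2 (ℝ × Vec d) γ).1 + ⟪(WithLp.equiv 2 (ℝ × Vec d) γ).2, X ω⟫ := by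
    intro ω γ
    rw [hp_def, hinner, one_mul, real_inner_comm]
  have hpx₀ : ∀ ω, ⟪p ω, x₀⟫ = c * W ω := by
    intro ω
    rw [hp_def, hx₀_def]
    simp only [hinner, hmk, real_inner_smul_right]
    rw [real_inner_comm, huX]
    ring
  have hpv₀ : ∀ ω, ⟪p ω, v₀⟫ = W ω := by
    intro ω
    rw [hp_def, hv₀_def]
    simp only [hinner, hmk]
    rw [real_inner_comm, huX]
    ring
  have he₀γ : ∀ γ : Pr d, ⟪e₀, γ⟫ = (WithLp.equiv 2 (ℝ × Vec d) γ).1 := by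
    intro γ
    rw [he₀_def, hinner]
    simp
  have he₀x₀ : ⟪e₀, x₀⟫ = 0 := by
    rw [he₀γ, hx₀_def, hmk]
  have hnp : ∀ ω, ‖p ω‖ ^ 2 = 1 + ‖X ω‖ ^ 2 := by
    intro ω
    rw [hp_def]
    rw [WithLp.prod_norm_sq_eq_of_L2]
    simp [mkp, sq_abs]
  have hpc : Continuous (fun x : Vec d => mkp 1 x) :=
    (WithLp.prodContinuousLinearEquiv 2 ℝ ℝ (Vec d)).symm.continuous.comp
      (continuous_const.prodMk continuous_id)
  have hps : StronglyMeasurable p := by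
    rw [hp_def]
    exact hpc.comp_stronglyMeasurable hXm.stronglyMeasurable
  -- integrability of ‖X‖²
  have hXi2 : Integrable (fun ω => ‖X ω‖ ^ 2) P := by
    refine ((integrable_const (2 * ‖μ‖ ^ 2)).add (hzn2.const_mul 2)).mono'
      ((hXm.norm.pow_const 2).aestronglyMeasurable) ?_
    filter_upwards with ω
    simp only [Pi.add_apply]
    have h1 : ‖X ω‖ ≤ ‖μ‖ + ‖Z ω‖ := by
      rw [hX ω]
      refine (norm_add_le _ _).trans ?_
      rw [norm_smul, Real.norm_eq_abs, hYabs ω, one_mul]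
    rw [Real.norm_eq_abs, abs_of_nonneg (by positivity)]
    have h2 : ‖X ω‖ ^ 2 ≤ (‖μ‖ + ‖Z ω‖) ^ 2 := by
      have := norm_nonneg (X ω)
      nlinarith [norm_nonneg μ, norm_nonneg (Z ω)]
    have h3 : (‖μ‖ + ‖Z ω‖) ^ 2 ≤ 2 * ‖μ‖ ^ 2 + 2 * ‖Z ω‖ ^ 2 := by
      nlinarith [sq_nonneg (‖μ‖ - ‖Z ω‖)]
    linarith
  set K : ℝ := F₂ * (‖x₀‖ + 1) with hK_def
  have hK0 : 0 ≤ K := by positivity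
  have hFb : ∀ (γ : Pr d), ‖γ‖ ≤ ‖x₀‖ + 1 → ∀ ω,
      ‖deriv f ⟪p ω, γ⟫ • innerSL ℝ (p ω)‖ ≤ K * (1 + ‖X ω‖ ^ 2) := by
    intro γ hγ ω
    have hns : ‖deriv f ⟪p ω, γ⟫ • innerSL ℝ (p ω)‖
        = |deriv f ⟪p ω, γ⟫| * ‖p ω‖ := by
      rw [norm_smul (deriv f ⟪p ω, γ⟫) (innerSL ℝ (p ω)), Real.norm_eq_abs, innerSL_apply_norm]
    rw [hns]
    have h1 : |deriv f ⟪p ω, γ⟫| ≤ F₂ * (‖p ω‖ * ‖γ‖) := by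
      refine (hgrow1 _).trans ?_
      have := abs_real_inner_le_norm (p ω) γ
      nlinarith
    have h2 : ‖p ω‖ ^ 2 = 1 + ‖X ω‖ ^ 2 := hnp ω
    calc |deriv f ⟪p ω, γ⟫| * ‖p ω‖
        ≤ (F₂ * (‖p ω‖ * ‖γ‖)) * ‖p ω‖ := mul_le_mul_of_nonneg_right h1 (norm_nonneg _)
      _ = F₂ * ‖γ‖ * ‖p ω‖ ^ 2 := by ring
      _ = F₂ * ‖γ‖ * (1 + ‖X ω‖ ^ 2) := by rw [h2]
      _ ≤ F₂ * (‖x₀‖ + 1) * (1 + ‖X ω‖ ^ 2) := by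
          refine mul_le_mul_of_nonneg_right ?_ (by positivity)
          exact mul_le_mul_of_nonneg_left hγ hF₂0
      _ = K * (1 + ‖X ω‖ ^ 2) := by rw [hK_def]
  have hball : ∀ γ ∈ Metric.ball x₀ 1, ‖γ‖ ≤ ‖x₀‖ + 1 := by
    intro γ hγ
    have h1 := norm_sub_norm_le γ x₀
    have h2 : ‖γ - x₀‖ < 1 := by rwa [Metric.mem_ball, dist_eq_norm] at hγ
    linarith
  have hbound_int : Integrable (fun ω => K * (1 + ‖X ω‖ ^ 2)) P := by
    exact ((integrable_const (1:ℝ)).add hXi2).const_mul K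
  -- measurability of the integrands
  have hsm_inner : ∀ γ : Pr d, StronglyMeasurable (fun ω => (⟪p ω, γ⟫ : ℝ)) := by
    intro γ
    exact (continuous_id.inner continuous_const).comp_stronglyMeasurable hps
  have hF'sm : AEStronglyMeasurable (fun ω => deriv f ⟪p ω, x₀⟫ • innerSL ℝ (p ω)) P := by
    have sm1 : StronglyMeasurable (fun ω => deriv f ⟪p ω, x₀⟫) :=
      hfc1.comp_stronglyMeasurable (hsm_inner x₀)
    have smp : StronglyMeasurable (fun ω => (deriv f ⟪p ω, x₀⟫, p ω)) := sm1.prodMk hps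
    have hcg : Continuous (fun q : ℝ × Pr d => q.1 • innerSL ℝ q.2) :=
      continuous_fst.smul ((innerSL ℝ).continuous.comp continuous_snd)
    exact (hcg.comp_stronglyMeasurable smp).aestronglyMeasurable
  have hFx₀_int : Integrable (fun ω => f ⟪p ω, x₀⟫) P := by
    refine ((integrable_const |f 0|).add (hWint2.const_mul (F₂ * c ^ 2))).mono'
      (hf.continuous.comp_stronglyMeasurable (hsm_inner x₀)).aestronglyMeasurable ?_
    filter_upwards with ω
    simp only [Pi.add_apply]
    rw [Real.norm_eq_abs, hpx₀ ω]
    have h1 := hgrowf (c * W ω)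
    have h2 : |f (c * W ω)| - |f 0| ≤ |f (c * W ω) - f 0| := abs_sub_abs_le_abs_sub _ _
    nlinarith [sq_nonneg (W ω)]
  -- the derivative of the integral part
  have hMain : HasFDerivAt (fun γ : Pr d => ∫ ω, f ⟪p ω, γ⟫ ∂P)
      (∫ ω, deriv f ⟪p ω, x₀⟫ • innerSL ℝ (p ω) ∂P) x₀ := by
    apply hasFDerivAt_integral_of_dominated_of_fderiv_le
      (F' := fun (γ : Pr d) ω => deriv f ⟪p ω, γ⟫ • innerSL ℝ (p ω))
      (bound := fun ω => K * (1 + ‖X ω‖ ^ 2)) (s := Metric.ball x₀ 1) (Metric.ball_mem_nhds x₀ one_pos)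
    · filter_upwards with γ
      exact (hf.continuous.comp_stronglyMeasurable (hsm_inner γ)).aestronglyMeasurable
    · exact hFx₀_int
    · exact hF'sm
    · filter_upwards with ω
      intro γ hγ
      exact hFb γ (hball γ hγ) ω
    · exact hbound_int
    · filter_upwards with ω
      intro γ hγ
      exact ((hfd ⟪p ω, γ⟫).hasDerivAt).comp_hasFDerivAt γ (innerSL ℝ (p ω)).hasFDerivAt
  -- the derivative of the quadratic part
  have hq1 : HasFDerivAt (fun γ : Pr d => (⟪e₀, γ⟫ : ℝ)) (innerSL ℝ e₀) x₀ :=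
    (innerSL ℝ e₀).hasFDerivAt
  have hq2 := (hq1.mul hq1).const_mul (lam / 2)
  have hz : (lam / 2) • ((⟪e₀, x₀⟫ : ℝ) • innerSL ℝ e₀ + (⟪e₀, x₀⟫ : ℝ) • innerSL ℝ e₀)
      = (0 : Pr d →L[ℝ] ℝ) := by
    rw [he₀x₀]; simp
  rw [hz] at hq2
  have hsum := hMain.add hq2
  rw [add_zero] at hsum
  have heq : (fun γ : Pr d => (∫ ω, f ⟪p ω, γ⟫ ∂P) + lam / 2 * (⟪e₀, γ⟫ * ⟪e₀, γ⟫))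
      = popLoss P X f lam := by
    funext γ
    simp only [popLoss]
    congr 1
    · refine integral_congr_ae (Filter.Eventually.of_forall fun ω => ?_)
      show f ⟪p ω, γ⟫ = _
      rw [hpγ ω γ]
    · rw [he₀γ γ]; ring
  have hsum : HasFDerivAt (popLoss P X f lam) (∫ ω, deriv f ⟪p ω, x₀⟫ • innerSL ℝ (p ω) ∂P) x₀ := by
    rw [← heq]; exact hsum
  -- extract fderiv = 0 from the gradient hypothesis
  have hfderiv : fderiv ℝ (popLoss P X f lam) x₀ = 0 := by
    have h := congrArg (InnerProductSpace.toDual ℝ (Pr d)) hgrad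
    simp only [gradient, LinearIsometryEquiv.apply_symm_apply, map_zero] at h
    exact h
  have hD0 : (∫ ω, deriv f ⟪p ω, x₀⟫ • innerSL ℝ (p ω) ∂P) = 0 := by
    have h := hsum.fderiv
    rw [hfderiv] at h
    exact h.symm
  have hF'int : Integrable (fun ω => deriv f ⟪p ω, x₀⟫ • innerSL ℝ (p ω)) P := by
    refine hbound_int.mono' hF'sm ?_
    filter_upwards with ω
    exact hFb x₀ (by linarith [norm_nonneg x₀]) ω
  have key : ∫ ω, deriv f (c * W ω) * W ω ∂P = 0 := by
    have h1 : (∫ ω, deriv f ⟪p ω, x₀⟫ • innerSL ℝ (p ω) ∂P) v₀ = 0 := by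
      rw [hD0]; simp
    rw [ContinuousLinearMap.integral_apply hF'int v₀] at h1
    have h2 : ∀ ω, (deriv f ⟪p ω, x₀⟫ • innerSL ℝ (p ω)) v₀
        = deriv f (c * W ω) * W ω := by
      intro ω
      rw [ContinuousLinearMap.smul_apply, innerSL_apply_apply, hpx₀ ω, hpv₀ ω, smul_eq_mul]
    rwa [integral_congr_ae (Filter.Eventually.of_forall h2)] at h1
  -- the quantitative estimate
  have hf'W_int : Integrable (fun ω => deriv f (c * W ω) * W ω) P := by
    refine (hWint2.const_mul (F₂ * c)).mono'
      (((hfc1.comp_stronglyMeasurable ((measurable_const.mul hWm).stronglyMeasurable)).mul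
        hWm.stronglyMeasurable).aestronglyMeasurable) ?_
    filter_upwards with ω
    rw [Real.norm_eq_abs, abs_mul]
    have h1 := hgrow1 (c * W ω)
    rw [abs_mul, abs_of_pos hc] at h1
    calc |deriv f (c * W ω)| * |W ω| ≤ (F₂ * (c * |W ω|)) * |W ω| :=
          mul_le_mul_of_nonneg_right h1 (abs_nonneg _)
      _ = F₂ * c * |W ω| ^ 2 := by ring
      _ = F₂ * c * W ω ^ 2 := by rw [sq_abs]
  have hr : ∀ ω, |deriv f (c * W ω) * W ω - A * c * W ω ^ 2| ≤ F₃ * c ^ 2 * |W ω| ^ 3 := by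
    intro ω
    have h1 := htaylor (c * W ω)
    calc |deriv f (c * W ω) * W ω - A * c * W ω ^ 2|
        = |deriv f (c * W ω) - A * (c * W ω)| * |W ω| := by
          rw [← abs_mul]; ring_nf
      _ ≤ (F₃ * (c * W ω) ^ 2) * |W ω| := mul_le_mul_of_nonneg_right h1 (abs_nonneg _)
      _ = F₃ * c ^ 2 * |W ω| ^ 3 := by
          rw [show (c * W ω) ^ 2 = c ^ 2 * W ω ^ 2 by ring, ← sq_abs (W ω)]; ring
  have hrint : Integrable (fun ω => deriv f (c * W ω) * W ω - A * c * W ω ^ 2) P :=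
    hf'W_int.sub (hWint2.const_mul (A * c))
  have hdecomp : ∫ ω, deriv f (c * W ω) * W ω ∂P
      = (A * c) * (‖μ‖ ^ 2 + 1) + ∫ ω, (deriv f (c * W ω) * W ω - A * c * W ω ^ 2) ∂P := by
    have h1 : ∫ ω, (deriv f (c * W ω) * W ω - A * c * W ω ^ 2) ∂P
        = (∫ ω, deriv f (c * W ω) * W ω ∂P) - ∫ ω, A * c * W ω ^ 2 ∂P :=
      integral_sub hf'W_int (hWint2.const_mul (A * c))
    have h2 : ∫ ω, A * c * W ω ^ 2 ∂P = (A * c) * (‖μ‖ ^ 2 + 1) := by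
      rw [integral_const_mul, hW2]
    rw [h1, h2]
    ring
  obtain ⟨I3, hI3⟩ : ∃ r : ℝ, (∫ ω, |W ω| ^ 3 ∂P) = r := ⟨_, rfl⟩
  obtain ⟨R, hR⟩ : ∃ r : ℝ,
      (∫ ω, (deriv f (c * W ω) * W ω - A * c * W ω ^ 2) ∂P) = r := ⟨_, rfl⟩
  have hI3_nonneg : 0 ≤ I3 := by
    rw [← hI3]
    exact integral_nonneg fun ω => by positivity
  have hrbound : R ≤ F₃ * c ^ 2 * I3 := by
    rw [← hI3, ← hR]
    calc ∫ ω, (deriv f (c * W ω) * W ω - A * c * W ω ^ 2) ∂P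
        ≤ |∫ ω, (deriv f (c * W ω) * W ω - A * c * W ω ^ 2) ∂P| := le_abs_self _
      _ ≤ ∫ ω, |deriv f (c * W ω) * W ω - A * c * W ω ^ 2| ∂P := by
          have habs := norm_integral_le_integral_norm (μ := P)
            (f := fun ω => deriv f (c * W ω) * W ω - A * c * W ω ^ 2)
          simpa [Real.norm_eq_abs] using habs
      _ ≤ ∫ ω, F₃ * c ^ 2 * |W ω| ^ 3 ∂P :=
          integral_mono hrint.abs (hWint3.const_mul (F₃ * c ^ 2)) (fun ω => hr ω)
      _ = F₃ * c ^ 2 * ∫ ω, |W ω| ^ 3 ∂P := by rw [integral_const_mul]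
  have hkey2 : (A * c) * (‖μ‖ ^ 2 + 1) + R = 0 := by
    rw [← hR, ← hdecomp]
    exact key
  have hIneq : -A * c * (‖μ‖ ^ 2 + 1) ≤ F₃ * c ^ 2 * I3 := by nlinarith [hrbound, hkey2]
  have hμ2 : (0:ℝ) < ‖μ‖ ^ 2 + 1 := by positivity
  have h5 : 0 < F₃ * c ^ 2 * I3 := by
    refine lt_of_lt_of_le ?_ hIneq
    have hA0 : 0 < -A := by linarith
    positivity
  have hden : 0 < F₃ * I3 := by
    rcases lt_or_ge 0 (F₃ * I3) with h | h
    · exact h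
    · exfalso
      nlinarith [sq_nonneg c]
  have hgoal_eq : (∫ ω, |‖μ‖ * Y ω + ⟪u, Z ω⟫| ^ 3 ∂P) = I3 := by
    rw [← hI3]
  rw [hgoal_eq, div_le_iff₀ hden]
  nlinarith [hIneq, mul_pos hc hden]
end
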